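/- Let X be a noetherian topological space with irreducible components X₁, …, Xₙ and let Y be a proper closed subset of X. Then the multiset of dimensions of irreducible components of Y, arranged in weakly decreasing order, is strictly smaller in lexicographic order than that of X (assuming all these dimensions are finite). -/

import Mathlib

open TopologicalSpace

section Comb
variable {α : Type*} [LinearOrder α]

lemma lex_orderedInsert (x : α) : ∀ {l₁ l₂ : List α}, List.Lex (· < ·) l₁ l₂ →
    List.Lex (· < ·) (List.orderedInsert (· ≥ ·) x l₁) (List.orderedInsert (· ≥ ·) x l₂) := by
  intro l₁ l₂ h
  induction h with
  | nil =>
    rename_i a l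
    simp only [List.orderedInsert]
    split_ifs with h1
    · exact List.Lex.cons List.Lex.nil
    · exact List.Lex.rel (lt_of_not_ge h1)
  | @cons a l₁ l₂ h ih =>
    simp only [List.orderedInsert]
    split_ifs with h1
    · exact List.Lex.cons (List.Lex.cons h)
    · exact List.Lex.cons ih
  | @rel a₁ l₁ a₂ l₂ h =>
    simp only [List.orderedInsert]
    by_cases h2 : x ≥ a₂
    · have h1 : x ≥ a₁ := le_trans h.le h2
      rw [if_pos h1, if_pos h2]
      exact List.Lex.cons (List.Lex.rel h)
    · rw [if_neg h2]
      by_cases h1 : x ≥ a₁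
      · rw [if_pos h1]
        exact List.Lex.rel (lt_of_not_ge h2)
      · rw [if_neg h1]
        exact List.Lex.rel h

lemma sorted_ge_unique {l₁ l₂ : List α} (h : List.Perm l₁ l₂) (s1 : l₁.Pairwise (· ≥ ·))
    (s2 : l₂.Pairwise (· ≥ ·)) : l₁ = l₂ := by
  haveI : IsAntisymm α (· ≥ ·) := ⟨fun a b h1 h2 => le_antisymm h2 h1⟩
  exact List.Perm.eq_of_pairwise (fun a b _ _ h1 h2 => le_antisymm h2 h1) s1 s2 h

lemma comb_lex (c : Multiset α) : ∀ (s t : Multiset α) (lS lT : List α),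
    lS.Pairwise (· ≥ ·) → lT.Pairwise (· ≥ ·) → (lS : Multiset α) = c + s →
    (lT : Multiset α) = c + t → t ≠ 0 → (∀ b ∈ s, ∃ a ∈ t, b < a) →
    List.Lex (· < ·) lS lT := by
  haveI : Std.Total (α := α) (· ≥ ·) := ⟨fun a b => le_total b a⟩
  haveI : IsTrans α (· ≥ ·) := ⟨fun a b c h1 h2 => le_trans h2 h1⟩
  induction c using Multiset.induction_on with
  | empty =>
    intro s t lS lT hS hT hmS hmT ht hst
    rw [zero_add] at hmS hmT
    cases lT with
    | nil => exact absurd hmT.symm ht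
    | cons a₂ lT' =>
      cases lS with
      | nil => exact List.Lex.nil
      | cons b lS' =>
        have hb : b ∈ s := by rw [← hmS]; simp
        obtain ⟨a, ha, hba⟩ := hst b hb
        have hmem : a ∈ a₂ :: lT' := by
          rw [← Multiset.mem_coe, hmT]; exact ha
        have ha2 : a ≤ a₂ := by
          rcases List.mem_cons.mp hmem with rfl | hmem'
          · exact le_rfl
          · exact (List.pairwise_cons.mp hT).1 a hmem'
        exact List.Lex.rel (lt_of_lt_of_le hba ha2)
  | cons x c ih =>
    intro s t lS lT hS hT hmS hmT ht hst
    set l₁ := List.insertionSort (· ≥ ·) (c + s).toList with hl₁def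
    set l₂ := List.insertionSort (· ≥ ·) (c + t).toList with hl₂def
    have hl₁sorted : l₁.Pairwise (· ≥ ·) := List.pairwise_insertionSort _ _
    have hl₂sorted : l₂.Pairwise (· ≥ ·) := List.pairwise_insertionSort _ _
    have hl₁ : (l₁ : Multiset α) = c + s := by
      rw [Multiset.coe_eq_coe.mpr (List.perm_insertionSort _ _), Multiset.coe_toList]
    have hl₂ : (l₂ : Multiset α) = c + t := by
      rw [Multiset.coe_eq_coe.mpr (List.perm_insertionSort _ _), Multiset.coe_toList]
    have key₁ : lS = List.orderedInsert (· ≥ ·) x l₁ := by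
      apply sorted_ge_unique
      · rw [← Multiset.coe_eq_coe,
          Multiset.coe_eq_coe.mpr (List.perm_orderedInsert _ x l₁), hmS,
          Multiset.cons_add, ← Multiset.cons_coe, hl₁]
      · exact hS
      · exact hl₁sorted.orderedInsert x l₁
    have key₂ : lT = List.orderedInsert (· ≥ ·) x l₂ := by
      apply sorted_ge_unique
      · rw [← Multiset.coe_eq_coe,
          Multiset.coe_eq_coe.mpr (List.perm_orderedInsert _ x l₂), hmT,
          Multiset.cons_add, ← Multiset.cons_coe, hl₂]
      · exact hT
      · exact hl₂sorted.orderedInsert x l₂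
    rw [key₁, key₂]
    exact lex_orderedInsert x (ih s t l₁ l₂ hl₁sorted hl₂sorted hl₁ hl₂ ht hst)

end Comb

lemma enat_le_sub_one_of_lt {a b : ℕ∞} (h : a < b) : a ≤ b - 1 := by
  cases b with
  | top => exact le_top.trans (by simp)
  | coe n =>
    have ha : a ≠ ⊤ := ne_top_of_lt h
    lift a to ℕ using ha with m
    have hmn : m < n := by exact_mod_cast h
    rw [← Nat.cast_one, ← ENat.coe_sub]
    exact_mod_cast Nat.le_sub_one_of_lt hmn

lemma enat_sub_one_lt {n : ℕ∞} (h0 : n ≠ 0) (ht : n ≠ ⊤) : n - 1 < n := by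
  lift n to ℕ using ht with m
  have hm : m ≠ 0 := by exact_mod_cast h0
  rw [← Nat.cast_one, ← ENat.coe_sub]
  exact_mod_cast Nat.sub_lt (Nat.pos_of_ne_zero hm) one_pos

lemma dim_image_subtype {X : Type*} [TopologicalSpace X] (Y : Set X) (Z : Set Y) :
    topologicalKrullDim Z = topologicalKrullDim (Subtype.val '' Z : Set X) := by
  have hemb : Topology.IsEmbedding ((Subtype.val : Y → X) ∘ (Subtype.val : Z → Y)) :=
    Topology.IsEmbedding.subtypeVal.comp Topology.IsEmbedding.subtypeVal
  have hr : Set.range ((Subtype.val : Y → X) ∘ (Subtype.val : Z → Y))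
      = (Subtype.val '' Z : Set X) := by
    rw [Set.range_comp, Subtype.range_val]
  let e := hemb.toHomeomorph.trans (Homeomorph.setCongr hr)
  exact IsHomeomorph.topologicalKrullDim_eq e e.isHomeomorph

lemma dim_lt_of_ssubset {X : Type*} [TopologicalSpace X] {Z T : Set X}
    (hZirr : IsIrreducible Z) (hZcl : IsClosed Z) (hTirr : IsIrreducible T)
    (hZT : Z ⊂ T) (hfin : topologicalKrullDim T < ⊤) :
    topologicalKrullDim Z < topologicalKrullDim T := by
  haveI : IrreducibleSpace T := Subtype.irreducibleSpace hTirr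
  haveI : IrreducibleSpace Z := Subtype.irreducibleSpace hZirr
  have hincl : Topology.IsClosedEmbedding (Set.inclusion hZT.subset) := by
    refine ⟨Topology.IsEmbedding.inclusion _, ?_⟩
    rw [Set.range_inclusion]
    exact hZcl.preimage continuous_subtype_val
  set F := IrreducibleCloseds.map _ hincl.continuous with hF
  have hFmono := IrreducibleCloseds.map_strictMono_of_isInducing hincl.isInducing
  set tT : IrreducibleCloseds T :=
    ⟨Set.univ, IrreducibleSpace.isIrreducible_univ _, isClosed_univ⟩ with htT
  obtain ⟨w, hwT, hwZ⟩ := Set.exists_of_ssubset hZT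
  have hlt : ∀ C : IrreducibleCloseds Z, F C < tT := by
    intro C
    apply lt_of_le_of_ne
    · intro x _; trivial
    · intro hEq
      have hwm : (⟨w, hwT⟩ : T) ∈ (F C : Set T) := by
        rw [hEq]; trivial
      rw [IrreducibleCloseds.coe_map, (hincl.isClosedMap _ C.isClosed).closure_eq] at hwm
      obtain ⟨z, _, hzeq⟩ := hwm
      apply hwZ
      have : ((Set.inclusion hZT.subset z : T) : X) = w := by rw [hzeq]
      rw [← this]
      exact z.2
  have hkT : Order.krullDim (IrreducibleCloseds T) < ⊤ := hfin
  set h₀ := Order.height tT with hh₀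
  have hh₀top : h₀ ≠ ⊤ := by
    intro h
    have h2 := Order.height_le_krullDim (a := tT)
    rw [← hh₀, h] at h2
    exact absurd (lt_of_le_of_lt h2 hkT) (by simp)
  have hkey : ∀ a : IrreducibleCloseds Z, Order.height a < h₀ := by
    intro a
    have h1 : Order.height a ≤ Order.height (F a) :=
      Order.height_le_height_apply_of_strictMono F hFmono a
    have h2 : Order.height (F a) < ⊤ := by
      rcases eq_or_ne (Order.height (F a)) ⊤ with h | h
      · exfalso
        have h3 := Order.height_le_krullDim (a := F a)
        rw [h] at h3
        exact absurd (lt_of_le_of_lt h3 hkT) (by simp)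
      · exact lt_top_iff_ne_top.mpr h
    exact lt_of_le_of_lt h1 (Order.height_strictMono (hlt a) h2)
  haveI hne : Nonempty (IrreducibleCloseds Z) :=
    ⟨⟨Set.univ, IrreducibleSpace.isIrreducible_univ _, isClosed_univ⟩⟩
  have h₀0 : h₀ ≠ 0 := by
    intro h
    have := hkey (Classical.arbitrary _)
    rw [h] at this
    exact absurd this (by simp)
  have hsup : topologicalKrullDim Z ≤ ((h₀ - 1 : ℕ∞) : WithBot ℕ∞) := by
    rw [topologicalKrullDim, Order.krullDim_eq_iSup_height_of_nonempty]
    apply WithBot.coe_le_coe.mpr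
    refine iSup_le fun a => ?_
    have hlt' := hkey a
    have h1 : Order.height a + 1 ≤ h₀ := (ENat.add_one_le_iff (ne_top_of_lt hlt')).mpr hlt'
    exact enat_le_sub_one_of_lt hlt'
  have hlast : ((h₀ - 1 : ℕ∞) : WithBot ℕ∞) < (h₀ : WithBot ℕ∞) :=
    WithBot.coe_lt_coe.mpr (enat_sub_one_lt h₀0 hh₀top)
  calc topologicalKrullDim Z ≤ ((h₀ - 1 : ℕ∞) : WithBot ℕ∞) := hsup
    _ < (h₀ : WithBot ℕ∞) := hlast
    _ ≤ topologicalKrullDim T := Order.height_le_krullDim (a := tT)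

lemma exists_component_superset {X : Type*} [TopologicalSpace X] {s : Set X}
    (hs : IsIrreducible s) : ∃ T ∈ irreducibleComponents X, s ⊆ T := by
  obtain ⟨t, htp, hst, hmax⟩ := exists_preirreducible s hs.2
  exact ⟨t, ⟨⟨hs.1.mono hst, htp⟩, fun u hu hle => (hmax u hu.2 hle).le⟩, hst⟩

theorem delta_lt_of_proper_closed_topological {X : Type*} [TopologicalSpace X]
    [NoetherianSpace X] [QuasiSober X]
    (Y : Set X) (hYclosed : IsClosed Y) (hYproper : Y ≠ Set.univ)
    (hfin : ∀ T ∈ irreducibleComponents X, topologicalKrullDim T < ⊤)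
    (cX : Finset (Set X)) (hcX : ↑cX = irreducibleComponents X)
    (cY : Finset (Set Y)) (hcY : ↑cY = irreducibleComponents Y)
    (lX : List (WithBot ℕ∞)) (hlXsorted : lX.Pairwise (· ≥ ·))
    (hlX : (lX : Multiset (WithBot ℕ∞)) =
      cX.val.map fun T : Set X => topologicalKrullDim T)
    (lY : List (WithBot ℕ∞)) (hlYsorted : lY.Pairwise (· ≥ ·))
    (hlY : (lY : Multiset (WithBot ℕ∞)) =
      cY.val.map fun T : Set Y => topologicalKrullDim T) :
    List.Lex (· < ·) lY lX := by
  classical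
  have hvalCE : Topology.IsClosedEmbedding (Subtype.val : Y → X) :=
    hYclosed.isClosedEmbedding_subtypeVal
  set im : Set Y → Set X := fun Z => Subtype.val '' Z with him
  have him_inj : Function.Injective im :=
    Set.image_injective.mpr Subtype.val_injective
  have hYmem : ∀ Z ∈ cY, Z ∈ irreducibleComponents Y := fun Z hZ =>
    hcY ▸ Finset.mem_coe.mpr hZ
  have hZirr : ∀ Z ∈ cY, IsIrreducible (im Z) := fun Z hZ =>
    (hYmem Z hZ).1.image _ continuous_subtype_val.continuousOn
  have hZcl : ∀ Z ∈ cY, IsClosed (im Z) := fun Z hZ =>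
    hvalCE.isClosedMap _ (isClosed_of_mem_irreducibleComponents _ (hYmem Z hZ))
  have hZsubY : ∀ Z : Set Y, im Z ⊆ Y := by
    rintro Z x ⟨z, _, rfl⟩; exact z.2
  set E : Finset (Set Y) := cY.filter (fun Z => im Z ∈ irreducibleComponents X) with hE
  set φE : Finset (Set X) := E.image im with hφE
  have hEsub : E ⊆ cY := Finset.filter_subset _ _
  have hφEsub : φE ⊆ cX := by
    intro T hT
    obtain ⟨Z, hZE, rfl⟩ := Finset.mem_image.mp hT
    have h1 := (Finset.mem_filter.mp hZE).2
    rw [← hcX] at h1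
    exact Finset.mem_coe.mp h1
  have hsplitY : cY.val = E.val + (cY \ E).val := by
    rw [Finset.sdiff_val, add_tsub_cancel_of_le (Finset.val_le_iff.mpr hEsub)]
  have hsplitX : cX.val = φE.val + (cX \ φE).val := by
    rw [Finset.sdiff_val, add_tsub_cancel_of_le (Finset.val_le_iff.mpr hφEsub)]
  have hφEval : φE.val = E.val.map im := Finset.image_val_of_injOn him_inj.injOn
  have hdim : ∀ Z : Set Y, topologicalKrullDim Z = topologicalKrullDim (im Z) :=
    fun Z => dim_image_subtype Y Z
  obtain ⟨x, hx⟩ : ∃ x : X, x ∉ Y := by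
    by_contra h
    push_neg at h
    exact hYproper (Set.eq_univ_of_forall h)
  have hT₀mem : irreducibleComponent x ∈ cX := by
    have := irreducibleComponent_mem_irreducibleComponents x
    rw [← hcX] at this
    exact Finset.mem_coe.mp this
  have hT₀not : irreducibleComponent x ∉ φE := by
    intro h
    obtain ⟨Z, _, hZeq⟩ := Finset.mem_image.mp h
    have : x ∈ im Z := hZeq ▸ mem_irreducibleComponent
    exact hx (hZsubY Z this)
  have hT₀memdiff : irreducibleComponent x ∈ cX \ φE := Finset.mem_sdiff.mpr ⟨hT₀mem, hT₀not⟩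
  refine comb_lex (E.val.map fun Z : Set Y => topologicalKrullDim Z)
    ((cY \ E).val.map fun Z : Set Y => topologicalKrullDim Z)
    ((cX \ φE).val.map fun T : Set X => topologicalKrullDim T)
    lY lX hlYsorted hlXsorted ?_ ?_ ?_ ?_
  · rw [hlY, hsplitY, Multiset.map_add]
  · rw [hlX, hsplitX, Multiset.map_add]
    congr 1
    rw [hφEval, Multiset.map_map]
    exact Multiset.map_congr rfl fun Z _ => (hdim Z).symm
  · intro h
    have hm : topologicalKrullDim (irreducibleComponent x : Set X) ∈
        (cX \ φE).val.map fun T : Set X => topologicalKrullDim T :=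
      Multiset.mem_map_of_mem _ (Finset.mem_def.mp hT₀memdiff)
    rw [h] at hm
    exact absurd hm (Multiset.notMem_zero _)
  · intro b hb
    obtain ⟨Z, hZmem, rfl⟩ := Multiset.mem_map.mp hb
    have hZdiff : Z ∈ cY \ E := Finset.mem_def.mpr hZmem
    have hZcY : Z ∈ cY := (Finset.mem_sdiff.mp hZdiff).1
    have hZnE : Z ∉ E := (Finset.mem_sdiff.mp hZdiff).2
    have hZnotcomp : im Z ∉ irreducibleComponents X := fun h =>
      hZnE (Finset.mem_filter.mpr ⟨hZcY, h⟩)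
    obtain ⟨T, hTcomp, hsub⟩ := exists_component_superset (hZirr Z hZcY)
    have hTcX : T ∈ cX := by
      rw [← hcX] at hTcomp
      exact Finset.mem_coe.mp hTcomp
    have hTcomp' : T ∈ irreducibleComponents X := by
      rw [← hcX]; exact Finset.mem_coe.mpr hTcX
    have hssub : im Z ⊂ T := hsub.ssubset_of_ne (fun h => hZnotcomp (h ▸ hTcomp'))
    have hTnotφE : T ∉ φE := by
      intro h
      obtain ⟨Z', hZ'E, hZ'eq⟩ := Finset.mem_image.mp h
      have hZ'cY : Z' ∈ cY := hEsub hZ'E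
      have h1 : Z ⊆ Z' := by
        intro y hy
        have hmem : (y : X) ∈ im Z' := hZ'eq ▸ hsub ⟨y, hy, rfl⟩
        obtain ⟨y', hy', hyeq⟩ := hmem
        rwa [← Subtype.val_injective hyeq]
      have h2 : Z' ≤ Z := (hYmem Z hZcY).2 (hYmem Z' hZ'cY).1 h1
      exact hZnE ((le_antisymm h1 h2) ▸ hZ'E)
    have hTdiff : T ∈ cX \ φE := Finset.mem_sdiff.mpr ⟨hTcX, hTnotφE⟩
    refine ⟨topologicalKrullDim T, Multiset.mem_map_of_mem _ (Finset.mem_def.mp hTdiff), ?_⟩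
    rw [hdim Z]
    exact dim_lt_of_ssubset (hZirr Z hZcY) (hZcl Z hZcY) hTcomp'.1 hssub (hfin T hTcomp')
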